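/- Let a₀, a₁, a₂ be real numbers with a₂ > 0. Both roots of the quadratic a₂λ² + a₁λ + a₀ = 0 lie strictly inside the unit circle of ℂ if and only if a₂ + a₁ + a₀ > 0, a₂ − a₁ + a₀ > 0, and |a₀| < a₂. -/

import Mathlib

set_option maxHeartbeats 1000000

private lemma jury_real_root (a₀ a₁ a₂ x : ℝ) (ha₂ : 0 < a₂)
    (h1 : 0 < a₂ + a₁ + a₀) (h2 : 0 < a₂ - a₁ + a₀) (h3 : |a₀| < a₂)
    (hx : a₂*x^2 + a₁*x + a₀ = 0) : |x| < 1 := by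
  have hA : (1-x)*(a₂ + a₁ + a₂*x) = a₂+a₁+a₀ := by linear_combination -hx
  have hB : (1+x)*(a₂ - a₁ - a₂*x) = a₂-a₁+a₀ := by linear_combination -hx
  have hC : x*(-a₁ - a₂*x) = a₀ := by linear_combination -hx
  have habs := abs_lt.mp h3
  rw [abs_lt]
  constructor
  · by_contra hcon; push_neg at hcon
    have h5 : a₂ - a₁ - a₂*x ≤ 0 := by nlinarith [hB]
    nlinarith [hC]
  · by_contra hcon; push_neg at hcon
    have h5 : a₂ + a₁ + a₂*x ≤ 0 := by nlinarith [hA]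
    nlinarith [hC]

private lemma jury_nonreal_root (a₀ a₁ a₂ : ℝ) (ha₂ : 0 < a₂) (h3 : |a₀| < a₂) (z : ℂ)
    (hz : (a₂ : ℂ) * z ^ 2 + (a₁ : ℂ) * z + (a₀ : ℂ) = 0) (hy : z.im ≠ 0) :
    ‖z‖ < 1 := by
  have hre : a₂*(z.re^2 - z.im^2) + a₁*z.re + a₀ = 0 := by
    have := congrArg Complex.re hz
    simp [Complex.add_re, Complex.mul_re, pow_two, Complex.mul_im] at this
    ring_nf at this ⊢
    linarith [this]
  have him : z.im * (2*a₂*z.re + a₁) = 0 := by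
    have := congrArg Complex.im hz
    simp [Complex.add_im, Complex.mul_re, pow_two, Complex.mul_im] at this
    ring_nf at this ⊢
    linarith [this]
  have hx2 : 2*a₂*z.re + a₁ = 0 := by
    rcases mul_eq_zero.mp him with h | h
    · exact absurd h hy
    · exact h
  have hns : a₂ * (z.re^2 + z.im^2) = a₀ := by
    linear_combination -hre + z.re * hx2
  have hsq : (‖z‖)^2 = z.re^2 + z.im^2 := by
    rw [Complex.sq_norm, Complex.normSq_apply]; ring
  have habs := abs_lt.mp h3
  nlinarith [norm_nonneg z, hsq, hns, sq_nonneg (‖z‖ - 1),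
    sq_nonneg (‖z‖ + 1)]

private lemma jury_fwd_real (a₀ a₁ a₂ : ℝ) (ha₂ : 0 < a₂)
    (H : ∀ z : ℂ, (a₂ : ℂ) * z ^ 2 + (a₁ : ℂ) * z + (a₀ : ℂ) = 0 → ‖z‖ < 1)
    (hD : 0 ≤ a₁^2 - 4*a₂*a₀) :
    (0 < a₂ + a₁ + a₀ ∧ 0 < a₂ - a₁ + a₀ ∧ |a₀| < a₂) := by
  set s := Real.sqrt (a₁^2 - 4*a₂*a₀) with hsdef
  have hs : s^2 = a₁^2 - 4*a₂*a₀ := Real.sq_sqrt hD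
  have ha₂' : a₂ ≠ 0 := ne_of_gt ha₂
  set x₁ := (-a₁ + s)/(2*a₂) with hx₁
  set x₂ := (-a₁ - s)/(2*a₂) with hx₂
  have hr1 : a₂*x₁^2 + a₁*x₁ + a₀ = 0 := by
    rw [hx₁]; field_simp; linear_combination hs
  have hr2 : a₂*x₂^2 + a₁*x₂ + a₀ = 0 := by
    rw [hx₂]; field_simp; linear_combination hs
  have hb1 : |x₁| < 1 := by
    have := H (x₁ : ℂ) (by exact_mod_cast hr1)
    rwa [Complex.norm_real, Real.norm_eq_abs] at this
  have hb2 : |x₂| < 1 := by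
    have := H (x₂ : ℂ) (by exact_mod_cast hr2)
    rwa [Complex.norm_real, Real.norm_eq_abs] at this
  have e1 : a₂+a₁+a₀ = a₂*(1-x₁)*(1-x₂) := by
    rw [hx₁, hx₂]; field_simp; linear_combination hs
  have e2 : a₂-a₁+a₀ = a₂*(1+x₁)*(1+x₂) := by
    rw [hx₁, hx₂]; field_simp; linear_combination hs
  have e3 : a₀ = a₂*x₁*x₂ := by
    rw [hx₁, hx₂]; field_simp; linear_combination hs
  have hb1' := abs_lt.mp hb1
  have hb2' := abs_lt.mp hb2
  have t1 : (0:ℝ) ≤ a₂*(x₁-x₂)^2 := by positivity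
  have t2 : (0:ℝ) ≤ a₂*(x₁+x₂)^2 := by positivity
  have hx1sq : x₁^2 < 1 := by nlinarith [hb1'.1, hb1'.2]
  have hx2sq : x₂^2 < 1 := by nlinarith [hb2'.1, hb2'.2]
  have t3 : a₂*x₁^2 < a₂ := by nlinarith [mul_lt_mul_of_pos_left hx1sq ha₂]
  have t4 : a₂*x₂^2 < a₂ := by nlinarith [mul_lt_mul_of_pos_left hx2sq ha₂]
  clear_value s x₁ x₂
  refine ⟨?_, ?_, ?_⟩
  · rw [e1]
    exact mul_pos (mul_pos ha₂ (by linarith [hb1'.2])) (by linarith [hb2'.2])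
  · rw [e2]
    exact mul_pos (mul_pos ha₂ (by linarith [hb1'.1])) (by linarith [hb2'.1])
  · rw [e3, abs_lt]
    have id1 : a₂*(x₁-x₂)^2 = a₂*x₁^2 - 2*(a₂*x₁*x₂) + a₂*x₂^2 := by ring
    have id2 : a₂*(x₁+x₂)^2 = a₂*x₁^2 + 2*(a₂*x₁*x₂) + a₂*x₂^2 := by ring
    constructor
    · linarith [t2, id2, t3, t4]
    · linarith [t1, id1, t3, t4]

private lemma jury_fwd_complex (a₀ a₁ a₂ : ℝ) (ha₂ : 0 < a₂)
    (H : ∀ z : ℂ, (a₂ : ℂ) * z ^ 2 + (a₁ : ℂ) * z + (a₀ : ℂ) = 0 → ‖z‖ < 1)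
    (hD : a₁^2 - 4*a₂*a₀ < 0) :
    (0 < a₂ + a₁ + a₀ ∧ 0 < a₂ - a₁ + a₀ ∧ |a₀| < a₂) := by
  have hD' : 0 ≤ 4*a₂*a₀ - a₁^2 := by linarith
  set s := Real.sqrt (4*a₂*a₀ - a₁^2) with hsdef
  have hs : s^2 = 4*a₂*a₀ - a₁^2 := Real.sq_sqrt hD'
  have ha₂' : a₂ ≠ 0 := ne_of_gt ha₂
  set z : ℂ := ⟨-a₁/(2*a₂), s/(2*a₂)⟩ with hzdef
  have hzre : z.re = -a₁/(2*a₂) := rfl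
  have hzim : z.im = s/(2*a₂) := rfl
  have hroot : (a₂ : ℂ) * z ^ 2 + (a₁ : ℂ) * z + (a₀ : ℂ) = 0 := by
    rw [Complex.ext_iff]
    constructor
    · simp [pow_two, Complex.add_re, Complex.mul_re, Complex.mul_im, hzre, hzim]
      field_simp
      linear_combination (-1) * hs
    · simp [pow_two, Complex.add_im, Complex.mul_re, Complex.mul_im, hzre, hzim]
      field_simp
      ring
  have habs := H z hroot
  clear_value s z
  have hnsq : (‖z‖)^2 = z.re^2 + z.im^2 := by
    rw [Complex.sq_norm, Complex.normSq_apply]; ring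
  have hn : a₂ * (z.re^2 + z.im^2) = a₀ := by
    rw [hzre, hzim]; field_simp; linear_combination hs
  have hlt1 : z.re^2 + z.im^2 < 1 := by
    nlinarith [norm_nonneg z, hnsq, habs]
  have hge0 : 0 ≤ z.re^2 + z.im^2 := by positivity
  have h1 : a₂ * ((1 - z.re)^2 + z.im^2) = a₂ + a₁ + a₀ := by
    rw [hzre, hzim]; field_simp; linear_combination hs
  have h2 : a₂ * ((1 + z.re)^2 + z.im^2) = a₂ - a₁ + a₀ := by
    rw [hzre, hzim]; field_simp; linear_combination hs
  have hz1 : (1 - z.re)^2 + z.im^2 ≠ 0 := by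
    intro h
    have h1' : z.re = 1 := by nlinarith [sq_nonneg (1 - z.re), sq_nonneg z.im]
    have h2' : z.im = 0 := by nlinarith [sq_nonneg (1 - z.re), sq_nonneg z.im]
    rw [h1', h2'] at hlt1; norm_num at hlt1
  have hz2 : (1 + z.re)^2 + z.im^2 ≠ 0 := by
    intro h
    have h1' : z.re = -1 := by nlinarith [sq_nonneg (1 + z.re), sq_nonneg z.im]
    have h2' : z.im = 0 := by nlinarith [sq_nonneg (1 + z.re), sq_nonneg z.im]
    rw [h1', h2'] at hlt1; norm_num at hlt1
  refine ⟨?_, ?_, ?_⟩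
  · rw [← h1]
    have : 0 < (1 - z.re)^2 + z.im^2 := lt_of_le_of_ne (by positivity) (Ne.symm hz1)
    positivity
  · rw [← h2]
    have : 0 < (1 + z.re)^2 + z.im^2 := lt_of_le_of_ne (by positivity) (Ne.symm hz2)
    positivity
  · rw [abs_lt]
    constructor
    · nlinarith [hn, hge0]
    · nlinarith [hn, hlt1]

/-- Jury stability criterion for real quadratics: both complex roots of
`a₂λ² + a₁λ + a₀` lie strictly inside the unit circle iff
`a₂ + a₁ + a₀ > 0`, `a₂ − a₁ + a₀ > 0`, and `|a₀| < a₂`. -/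
theorem stmt7 (a₀ a₁ a₂ : ℝ) (ha₂ : 0 < a₂) :
    (∀ z : ℂ, (a₂ : ℂ) * z ^ 2 + (a₁ : ℂ) * z + (a₀ : ℂ) = 0 → ‖z‖ < 1) ↔
      (0 < a₂ + a₁ + a₀ ∧ 0 < a₂ - a₁ + a₀ ∧ |a₀| < a₂) := by
  constructor
  · intro H
    rcases le_or_gt 0 (a₁^2 - 4*a₂*a₀) with hD | hD
    · exact jury_fwd_real a₀ a₁ a₂ ha₂ H hD
    · exact jury_fwd_complex a₀ a₁ a₂ ha₂ H hD
  · rintro ⟨h1, h2, h3⟩ z hz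
    by_cases hy : z.im = 0
    · have hre : a₂*(z.re^2 - z.im^2) + a₁*z.re + a₀ = 0 := by
        have := congrArg Complex.re hz
        simp [Complex.add_re, Complex.mul_re, pow_two, Complex.mul_im] at this
        ring_nf at this ⊢
        linarith [this]
      have hxeq : a₂*z.re^2 + a₁*z.re + a₀ = 0 := by
        rw [hy] at hre; linear_combination hre
      have hzeq : z = (z.re : ℂ) := Complex.ext (by simp) (by simp [hy])
      rw [hzeq, Complex.norm_real, Real.norm_eq_abs]
      exact jury_real_root a₀ a₁ a₂ z.re ha₂ h1 h2 h3 hxeq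
    · exact jury_nonreal_root a₀ a₁ a₂ ha₂ h3 z hz hy
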